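/- If A ∈ ℂ^{2n×2n} is skew-coninvolutory and (u, v, σ) is a singular triplet of A, then (-conj(v), conj(u), 1/σ) is also a singular triplet of A; consequently the singular values of A appear in pairs (σ, 1/σ). -/

import Mathlib

open Matrix Finset

-- counting lemma
lemma aux_card {m : ℕ} (f : Fin m → Fin m → ℝ) (hf : ∀ i j, 0 ≤ f i j)
    (hrow : ∀ i, ∑ j, f i j = 1) (hcol : ∀ j, ∑ i, f i j = 1)
    (R C : Finset (Fin m)) (h : ∀ i ∈ R, ∀ j, j ∉ C → f i j = 0) :
    R.card ≤ C.card := by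
  have key : (R.card : ℝ) ≤ (C.card : ℝ) := by
    calc (R.card : ℝ) = ∑ i ∈ R, (1:ℝ) := by simp
    _ = ∑ i ∈ R, ∑ j, f i j := by exact Finset.sum_congr rfl fun i _ => (hrow i).symm
    _ = ∑ i ∈ R, ∑ j ∈ C, f i j := by
        refine Finset.sum_congr rfl fun i hi => ?_
        exact (Finset.sum_subset (Finset.subset_univ C) fun j _ hj => h i hi j hj).symm
    _ = ∑ j ∈ C, ∑ i ∈ R, f i j := Finset.sum_comm
    _ ≤ ∑ j ∈ C, ∑ i, f i j := by
        refine Finset.sum_le_sum fun j _ => ?_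
        exact Finset.sum_le_sum_of_subset_of_nonneg (Finset.subset_univ R) fun i _ _ => hf i j
    _ = ∑ j ∈ C, (1:ℝ) := Finset.sum_congr rfl fun j _ => hcol j
    _ = C.card := by simp
  exact_mod_cast key



/-- If `A ∈ ℂ^{2n×2n}` is skew-coninvolutory and `(u, v, σ)` is a singular triplet of
`A`, then `(-conj v, conj u, 1/σ)` is also a singular triplet of `A`; consequently the
singular values of `A` appear in pairs `(σ, 1/σ)`. -/
theorem skewConinvolutory_singular_triplet_pair {n : ℕ}
    (A : Matrix (Fin (2 * n)) (Fin (2 * n)) ℂ)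
    (hA : A * A.map (starRingEnd ℂ) = -1) :
    (∀ (u v : Fin (2 * n) → ℂ) (σ : ℝ), 0 < σ →
      dotProduct (star u) u = 1 → dotProduct (star v) v = 1 →
      A.mulVec v = (σ : ℂ) • u → A.conjTranspose.mulVec u = (σ : ℂ) • v →
      A.mulVec (fun i => starRingEnd ℂ (u i)) =
          ((σ⁻¹ : ℝ) : ℂ) • (-(fun i => starRingEnd ℂ (v i))) ∧
        A.conjTranspose.mulVec (-(fun i => starRingEnd ℂ (v i))) =
          ((σ⁻¹ : ℝ) : ℂ) • (fun i => starRingEnd ℂ (u i))) ∧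
    (∀ (U V : Matrix (Fin (2 * n)) (Fin (2 * n)) ℂ) (σ : Fin (2 * n) → ℝ),
      U ∈ Matrix.unitaryGroup (Fin (2 * n)) ℂ → V ∈ Matrix.unitaryGroup (Fin (2 * n)) ℂ →
      (∀ j, 0 < σ j) → Antitone σ →
      A = U * Matrix.diagonal (fun j => (σ j : ℂ)) * V.conjTranspose →
      ∀ j, σ j.rev = (σ j)⁻¹) := by
  constructor
  · set c := starRingEnd ℂ with hc
    have hconj : ∀ (M : Matrix (Fin (2*n)) (Fin (2*n)) ℂ) (x : Fin (2*n) → ℂ),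
        (M.map c).mulVec (fun i => c (x i)) = fun i => c (M.mulVec x i) := by
      intro M x; funext i
      simp [Matrix.mulVec, dotProduct, map_sum, Matrix.map_apply]
    have hA' : A.map c * A = -1 := by
      have h1 : A * (-(A.map c)) = 1 := by rw [Matrix.mul_neg, hA]; simp
      have h2 : (-(A.map c)) * A = 1 := mul_eq_one_comm.mp h1
      rw [Matrix.neg_mul] at h2
      rw [← neg_neg (A.map c * A), h2]
    have hAHT : A.conjTranspose * A.transpose = -1 := by
      have := congrArg Matrix.conjTranspose hA'
      rw [Matrix.conjTranspose_mul] at this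
      have hmapct : (A.map c).conjTranspose = A.transpose := by
        ext i j; simp [Matrix.conjTranspose_apply, Matrix.map_apply, hc]
      rw [hmapct] at this
      simpa using this
    intro u v σ hσ hu hv hAv hAu
    have hσC : (σ : ℂ) ≠ 0 := by exact_mod_cast (ne_of_gt hσ)
    constructor
    · -- A (conj u) = σ⁻¹ • (-(conj v))
      have h1 : (A.map c).mulVec (fun i => c (v i)) = (σ:ℂ) • (fun i => c (u i)) := by
        rw [hconj]
        funext i
        rw [hAv]
        simp [hc]
      have h2 : A.mulVec ((A.map c).mulVec (fun i => c (v i))) = -(fun i => c (v i)) := by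
        rw [Matrix.mulVec_mulVec, hA]
        rw [Matrix.neg_mulVec, Matrix.one_mulVec]
      rw [h1, Matrix.mulVec_smul] at h2
      rw [Complex.ofReal_inv]
      rw [eq_inv_smul_iff₀ hσC]
      rw [h2]
    · have h1 : A.transpose.mulVec (fun i => c (u i)) = (σ:ℂ) • (fun i => c (v i)) := by
        have : (A.conjTranspose.map c).mulVec (fun i => c (u i)) = fun i => c ((A.conjTranspose.mulVec u) i) := hconj _ u
        have hmapct : A.conjTranspose.map c = A.transpose := by
          ext i j; simp [Matrix.conjTranspose_apply, Matrix.map_apply, hc]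
        rw [hmapct] at this
        rw [this]; funext i; rw [hAu]; simp [hc]
      have h2 : A.conjTranspose.mulVec (A.transpose.mulVec (fun i => c (u i))) = -(fun i => c (u i)) := by
        rw [Matrix.mulVec_mulVec, hAHT]
        rw [Matrix.neg_mulVec, Matrix.one_mulVec]
      rw [h1, Matrix.mulVec_smul] at h2
      rw [Matrix.mulVec_neg, Complex.ofReal_inv, eq_inv_smul_iff₀ hσC, smul_neg, h2]
      simp
  · set c := starRingEnd ℂ with hc
    intro U V σ hU hV hσpos hanti hSVD
    set D : Matrix (Fin (2*n)) (Fin (2*n)) ℂ := Matrix.diagonal (fun j => (σ j : ℂ)) with hD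
    set W : Matrix (Fin (2*n)) (Fin (2*n)) ℂ := V.conjTranspose * U.map c with hW
    have hUu : U.conjTranspose * U = 1 := hU.1
    have hUu' : U * U.conjTranspose = 1 := hU.2
    have hVv : V.conjTranspose * V = 1 := hV.1
    have hVv' : V * V.conjTranspose = 1 := hV.2
    -- map c of products
    have hDmap : D.map c = D := by
      ext i j; by_cases h : i = j <;> simp [hD, Matrix.map_apply, Matrix.diagonal, h, hc]
    have hVHmap : V.conjTranspose.map c = V.transpose := by
      ext i j; simp [Matrix.map_apply, Matrix.conjTranspose_apply, hc]
    have hAmap : A.map c = U.map c * D * V.transpose := by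
      rw [hSVD, Matrix.map_mul, Matrix.map_mul, hDmap, hVHmap]
    -- transposed unitarity facts
    have e2 : V.transpose * V.map c = 1 := by
      have := congrArg Matrix.transpose hVv
      rw [Matrix.transpose_mul] at this
      have : V.transpose * V.conjTranspose.transpose = 1 := by simpa using this
      have hct : V.conjTranspose.transpose = V.map c := by
        ext i j; simp [Matrix.conjTranspose_apply, Matrix.map_apply, hc]
      rwa [hct] at this
    have hUmapT : (U.map c).transpose = U.conjTranspose := by
      ext i j; simp [Matrix.conjTranspose_apply, Matrix.map_apply, hc]
    have hVHT : V.conjTranspose.transpose = V.map c := by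
      ext i j; simp [Matrix.conjTranspose_apply, Matrix.map_apply, hc]
    -- key identity D * W * D = -Wᵀ
    have hDWD : D * W * D = -(W.transpose) := by
      have E : U * D * V.conjTranspose * (U.map c * D * V.transpose) = -1 := by
        rw [← hAmap, ← hSVD]; exact hA
      have E2 := congrArg (fun X => U.conjTranspose * X * V.map c) E
      rw [show U.conjTranspose * (U * D * V.conjTranspose * (U.map c * D * V.transpose)) * V.map c
          = (U.conjTranspose * U) * D * (V.conjTranspose * U.map c) * D * (V.transpose * V.map c) by
        simp only [Matrix.mul_assoc]] at E2
      rw [hUu, e2, Matrix.one_mul, Matrix.mul_one] at E2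
      rw [← hW] at E2
      rw [E2]
      rw [Matrix.transpose_mul, hUmapT, hVHT]
      simp [Matrix.mul_assoc]
    -- entrywise
    have hent : ∀ i j, (σ i : ℂ) * W i j * (σ j : ℂ) = - W j i := by
      intro i j
      have := congrArg (fun M => M i j) hDWD
      simpa [hD, Matrix.mul_apply, Matrix.diagonal, Finset.sum_ite_eq, Finset.sum_ite_eq',
        Matrix.neg_apply, Matrix.transpose_apply, Matrix.diagonal_mul, Matrix.mul_diagonal] using this
    have hkey : ∀ i j, W i j ≠ 0 → σ i * σ j = 1 := by
      intro i j h0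
      have c1 := hent i j
      have c2 := hent j i
      have : ((σ i : ℂ) * (σ j : ℂ))^2 * W i j = W i j := by
        linear_combination (σ i : ℂ) * (σ j : ℂ) * c1 - c2
      have h2 : ((σ i : ℂ) * (σ j : ℂ))^2 = 1 := by
        exact mul_right_cancel₀ h0 (this.trans (one_mul (W i j)).symm)
      have hr : (σ i * σ j)^2 = 1 := by
        have : (((σ i * σ j)^2 : ℝ) : ℂ) = ((1:ℝ):ℂ) := by push_cast; exact h2
        exact_mod_cast this
      nlinarith [hσpos i, hσpos j, mul_pos (hσpos i) (hσpos j)]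
    -- unitarity of W
    have hUmapUT : U.map c * U.transpose = 1 := by
      have := congrArg (fun M => M.map c) hUu'
      simp only [Matrix.map_mul] at this
      have hUHmap : U.conjTranspose.map c = U.transpose := by
        ext i j; simp [Matrix.map_apply, Matrix.conjTranspose_apply, hc]
      rw [hUHmap] at this
      simpa [Matrix.map_one] using this
    have hUTUmap : U.transpose * U.map c = 1 := by
      have := congrArg (fun M => M.map c) hUu
      simp only [Matrix.map_mul] at this
      have hUHmap : U.conjTranspose.map c = U.transpose := by
        ext i j; simp [Matrix.map_apply, Matrix.conjTranspose_apply, hc]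
      rw [hUHmap] at this
      simpa [Matrix.map_one] using this
    have hWH : W.conjTranspose = U.transpose * V := by
      rw [hW, Matrix.conjTranspose_mul, Matrix.conjTranspose_conjTranspose]
      congr 1
      ext i j; simp [Matrix.conjTranspose_apply, Matrix.map_apply, hc]
    have hWW : W * W.conjTranspose = 1 := by
      rw [hWH, hW]
      rw [show Vᴴ * U.map c * (Uᵀ * V) = Vᴴ * (U.map c * Uᵀ) * V by
        simp only [Matrix.mul_assoc]]
      rw [hUmapUT, Matrix.mul_one, hVv]
    have hW'W : W.conjTranspose * W = 1 := by
      rw [hWH, hW]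
      rw [show Uᵀ * V * (Vᴴ * U.map c) = Uᵀ * (V * Vᴴ) * U.map c by
        simp only [Matrix.mul_assoc]]
      rw [hVv', Matrix.mul_one, hUTUmap]
    have hrow : ∀ i, ∑ j, Complex.normSq (W i j) = 1 := by
      intro i
      have := congrArg (fun M => M i i) hWW
      simp only [Matrix.mul_apply, Matrix.one_apply_eq, Matrix.conjTranspose_apply] at this
      have h2 : (((∑ j, Complex.normSq (W i j)) : ℝ) : ℂ) = 1 := by
        push_cast
        rw [← this]
        refine Finset.sum_congr rfl fun j _ => ?_
        rw [← Complex.mul_conj]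
        rfl
      exact_mod_cast h2
    have hcol : ∀ j, ∑ i, Complex.normSq (W i j) = 1 := by
      intro j
      have := congrArg (fun M => M j j) hW'W
      simp only [Matrix.mul_apply, Matrix.one_apply_eq, Matrix.conjTranspose_apply] at this
      have h2 : (((∑ i, Complex.normSq (W i j)) : ℝ) : ℂ) = 1 := by
        push_cast
        rw [← this]
        refine Finset.sum_congr rfl fun i _ => ?_
        rw [← Complex.mul_conj]
        ring_nf
        rfl
      exact_mod_cast h2
    have hfpos : ∀ i j, (0:ℝ) ≤ Complex.normSq (W i j) := fun i j => Complex.normSq_nonneg _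
    -- the counting
    intro k
    have hk2n : (k : ℕ) < 2 * n := k.isLt
    have hrevval : (k.rev : ℕ) = 2 * n - (k + 1) := rfl
    have h1 : σ k.rev ≤ (σ k)⁻¹ := by
      set R := Finset.univ.filter (fun i => σ k ≤ σ i) with hR
      set C := Finset.univ.filter (fun j => σ j ≤ (σ k)⁻¹) with hC
      have hcard : R.card ≤ C.card := by
        refine aux_card (fun i j => Complex.normSq (W i j)) hfpos hrow hcol R C ?_
        intro i hi j hj
        by_contra hne
        have hWij : W i j ≠ 0 := fun h => hne (by simp [h])
        have hij := hkey i j hWij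
        simp only [hR, Finset.mem_filter, Finset.mem_univ, true_and] at hi
        simp only [hC, Finset.mem_filter, Finset.mem_univ, true_and, not_le] at hj
        have := mul_inv_cancel₀ (ne_of_gt (hσpos k))
        nlinarith [hσpos i, hσpos j, hσpos k]
      have hRcard : (k : ℕ) + 1 ≤ R.card := by
        have hsub : Finset.Iic k ⊆ R := by
          intro i hi
          simp only [Finset.mem_Iic] at hi
          simp only [hR, Finset.mem_filter, Finset.mem_univ, true_and]
          exact hanti hi
        calc (k:ℕ) + 1 = (Finset.Iic k).card := (Fin.card_Iic k).symm
        _ ≤ R.card := Finset.card_le_card hsub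
      have hrevC : k.rev ∈ C := by
        by_contra hcon
        have hsub : C ⊆ Finset.Ioi k.rev := by
          intro j hj
          simp only [Finset.mem_Ioi]
          by_contra hlt
          push_neg at hlt
          exact hcon (by
            simp only [hC, Finset.mem_filter, Finset.mem_univ, true_and] at hj ⊢
            exact le_trans (hanti hlt) hj)
        have := Finset.card_le_card hsub
        rw [Fin.card_Ioi] at this
        omega
      simpa [hC, Finset.mem_filter] using hrevC
    have h2 : (σ k.rev)⁻¹ ≤ σ k := by
      set R := Finset.univ.filter (fun j => σ j ≤ σ k.rev) with hR
      set C := Finset.univ.filter (fun i => (σ k.rev)⁻¹ ≤ σ i) with hC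
      have hcard : R.card ≤ C.card := by
        refine aux_card (fun a b => Complex.normSq (W b a)) (fun a b => hfpos b a)
          hcol hrow R C ?_
        intro j hj i hi
        by_contra hne
        have hWij : W i j ≠ 0 := fun h => hne (by simp [h])
        have hij := hkey i j hWij
        simp only [hR, Finset.mem_filter, Finset.mem_univ, true_and] at hj
        simp only [hC, Finset.mem_filter, Finset.mem_univ, true_and, not_le] at hi
        have := mul_inv_cancel₀ (ne_of_gt (hσpos k.rev))
        nlinarith [hσpos i, hσpos j, hσpos k.rev]
      have hRcard : (k : ℕ) + 1 ≤ R.card := by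
        have hsub : Finset.Ici k.rev ⊆ R := by
          intro j hj
          simp only [Finset.mem_Ici] at hj
          simp only [hR, Finset.mem_filter, Finset.mem_univ, true_and]
          exact hanti hj
        have := Finset.card_le_card hsub
        rw [Fin.card_Ici] at this
        omega
      have hkC : k ∈ C := by
        by_contra hcon
        have hsub : C ⊆ Finset.Iio k := by
          intro i hi
          simp only [Finset.mem_Iio]
          by_contra hlt
          push_neg at hlt
          exact hcon (by
            simp only [hC, Finset.mem_filter, Finset.mem_univ, true_and] at hi ⊢
            exact le_trans hi (hanti hlt))
        have := Finset.card_le_card hsub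
        rw [Fin.card_Iio] at this
        omega
      simpa [hC, Finset.mem_filter] using hkC
    have hpk := hσpos k
    have hpr := hσpos k.rev
    have hprod : σ k * σ k.rev = 1 := by
      have u1 : σ k * σ k.rev ≤ 1 := by
        have := mul_le_mul_of_nonneg_left h1 hpk.le
        rwa [mul_inv_cancel₀ (ne_of_gt hpk)] at this
      have u2 : 1 ≤ σ k * σ k.rev := by
        have := mul_le_mul_of_nonneg_left h2 hpr.le
        rwa [mul_inv_cancel₀ (ne_of_gt hpr), mul_comm] at this
      linarith
    field_simp
    linarith [hprod]
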